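/- If two real symmetric matrices L and L' are cospectral with eigenbases related at nodes i and j by φ_k(i)² = φ'_k(j)² for all k, then the heat kernel signatures satisfy s_i(t) = s'_j(t) for all t ≥ 0. Conversely, if s_i(t) = s_j(t) for all t ≥ 0 (same matrix L with distinct eigenvalues λ_1 < ... < λ_n), then φ_k(i)² = φ_k(j)² for every k. -/

import Mathlib

/-- (1) If `L'` is cospectral with `L` and the eigenbases satisfy
`φ_k(i)² = φ'_k(j)²` for all `k`, then `s_i(t) = s'_j(t)` for all `t ≥ 0`.
(2) Conversely, for the same matrix `L` with pairwise distinct eigenvalues,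
`s_i(t) = s_j(t)` for all `t ≥ 0` implies `φ_k(i)² = φ_k(j)²` for every `k`. -/
theorem hks_cospectral_and_converse
    (n : ℕ) (L : Matrix (Fin n) (Fin n) ℝ) (hL : L.IsSymm)
    (lam : Fin n → ℝ) (phi : Fin n → Fin n → ℝ)
    (heig : ∀ k, L.mulVec (phi k) = lam k • phi k)
    (horth : ∀ k l, dotProduct (phi k) (phi l) = if k = l then 1 else 0)
    (i j : Fin n) :
    ((∀ (L' : Matrix (Fin n) (Fin n) ℝ) (phi' : Fin n → Fin n → ℝ),
        L'.IsSymm →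
        (∀ k, L'.mulVec (phi' k) = lam k • phi' k) →
        (∀ k l, dotProduct (phi' k) (phi' l) = if k = l then 1 else 0) →
        (∀ k, (phi k i) ^ 2 = (phi' k j) ^ 2) →
        ∀ t : ℝ, 0 ≤ t →
          ∑ k, Real.exp (-t * lam k) * (phi k i) ^ 2 =
            ∑ k, Real.exp (-t * lam k) * (phi' k j) ^ 2)) ∧
    (StrictMono lam →
      (∀ t : ℝ, 0 ≤ t →
        ∑ k, Real.exp (-t * lam k) * (phi k i) ^ 2 =
          ∑ k, Real.exp (-t * lam k) * (phi k j) ^ 2) →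
      ∀ k, (phi k i) ^ 2 = (phi k j) ^ 2) := by
  constructor
  · intro L' phi' _ _ _ hsq t _
    exact Finset.sum_congr rfl fun k _ => by rw [hsq k]
  · intro hmono hs
    -- coefficients
    set c : Fin n → ℝ := fun k => (phi k i) ^ 2 - (phi k j) ^ 2 with hc
    set x : Fin n → ℝ := fun k => Real.exp (-(lam k)) with hx
    have hxinj : Function.Injective x := by
      intro a b hab
      have := Real.exp_injective hab
      have : lam a = lam b := by linarith [neg_injective this]
      exact hmono.injective this
    -- Vandermonde system
    have hsys : ∀ m : Fin n, ∑ k, (Matrix.vandermonde x).transpose m k * c k = 0 := by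
      intro m
      have h := hs (m : ℕ) (by positivity)
      have : ∑ k, Real.exp (-(m : ℝ) * lam k) * c k = 0 := by
        simp only [hc, mul_sub]
        rw [Finset.sum_sub_distrib, h, sub_self]
      rw [← this]
      refine Finset.sum_congr rfl fun k _ => ?_
      congr 1
      simp only [Matrix.transpose_apply, Matrix.vandermonde, hx, Matrix.of_apply]
      rw [← Real.exp_nat_mul]
      ring_nf
    have hdet : ((Matrix.vandermonde x).transpose).det ≠ 0 := by
      rw [Matrix.det_transpose, Matrix.det_vandermonde]
      refine Finset.prod_ne_zero_iff.2 fun a _ => Finset.prod_ne_zero_iff.2 fun b hb => ?_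
      rw [Finset.mem_Ioi] at hb
      exact sub_ne_zero_of_ne fun h => absurd (hxinj h).symm (ne_of_lt hb)
    have hc0 : c = 0 := by
      apply Matrix.eq_zero_of_mulVec_eq_zero hdet
      funext m
      simpa [Matrix.mulVec, dotProduct] using hsys m
    intro k
    have := congrFun hc0 k
    simp only [hc, Pi.zero_apply] at this
    linarith
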